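/- For every integer n ≥ 4, the total number of valleys, summed over all flattened Catalan words of length n, equals (3^n·(n − 4) + 9n)/36. -/

import Mathlib

/-- `w : ℕ → ℕ` encodes a Catalan word of length `n` (0-indexed letters
`w 0, w 1, …, w (n-1)`): the first letter is `0`, each letter is at most the
previous one plus one, and `w` is normalized to vanish at positions `≥ n`. -/
def IsCatalanWord (n : ℕ) (w : ℕ → ℕ) : Prop :=
  w 0 = 0 ∧ (∀ i, i + 1 < n → w (i + 1) ≤ w i + 1) ∧ ∀ i, n ≤ i → w i = 0

/-- `j` is the starting position of one of the maximal weakly increasing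
contiguous subwords (runs of weak ascents) of the length-`n` word `w`. -/
def IsRunStart (n : ℕ) (w : ℕ → ℕ) (j : ℕ) : Prop :=
  j < n ∧ (j = 0 ∨ w j < w (j - 1))

/-- A word is flattened when the leading terms of its maximal weakly increasing
contiguous subwords, read from left to right, form a weakly increasing sequence. -/
def IsFlattened (n : ℕ) (w : ℕ → ℕ) : Prop :=
  ∀ i j, IsRunStart n w i → IsRunStart n w j → i ≤ j → w i ≤ w j

/-- The set of flattened Catalan words of length `n`. -/
def FlatCat (n : ℕ) : Set (ℕ → ℕ) := {w | IsCatalanWord n w ∧ IsFlattened n w}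

/-- Number of maximal strictly increasing contiguous subwords (runs of ascents):
`1 + #{ i : w_i ≥ w_{i+1} }`. -/
noncomputable def runsAsc (n : ℕ) (w : ℕ → ℕ) : ℕ :=
  1 + {i : ℕ | i + 1 < n ∧ w (i + 1) ≤ w i}.ncard

/-- Number of maximal weakly increasing contiguous subwords (runs of weak
ascents): `1 + #{ i : w_i > w_{i+1} }`. -/
noncomputable def wruns (n : ℕ) (w : ℕ → ℕ) : ℕ :=
  1 + {i : ℕ | i + 1 < n ∧ w (i + 1) < w i}.ncard

/-- Number of maximal strictly decreasing contiguous subwords (runs of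
descents): `1 + #{ i : w_i ≤ w_{i+1} }`. -/
noncomputable def runsDesc (n : ℕ) (w : ℕ → ℕ) : ℕ :=
  1 + {i : ℕ | i + 1 < n ∧ w i ≤ w (i + 1)}.ncard

/-- Number of maximal weakly decreasing contiguous subwords (runs of weak
descents): `1 + #{ i : w_i < w_{i+1} }`. -/
noncomputable def wrunsDesc (n : ℕ) (w : ℕ → ℕ) : ℕ :=
  1 + {i : ℕ | i + 1 < n ∧ w i < w (i + 1)}.ncard

/-- An `ℓ`-valley `a b^ℓ (b+1)` (with `a > b`) occurring at position `i` of the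
length-`n` word `w`. -/
def IsLValley (n : ℕ) (w : ℕ → ℕ) (ℓ i : ℕ) : Prop :=
  i + ℓ + 1 < n ∧ w (i + 1) < w i ∧ (∀ t, 1 ≤ t → t ≤ ℓ → w (i + t) = w (i + 1)) ∧
    w (i + ℓ + 1) = w (i + 1) + 1

/-- Number of `ℓ`-valleys of `w`. -/
noncomputable def lValleyCount (n : ℕ) (w : ℕ → ℕ) (ℓ : ℕ) : ℕ :=
  {i : ℕ | IsLValley n w ℓ i}.ncard

/-- Number of valleys of `w` (all `ℓ`-valleys, `ℓ ≥ 1`). -/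
noncomputable def valleyCount (n : ℕ) (w : ℕ → ℕ) : ℕ :=
  {p : ℕ × ℕ | 1 ≤ p.2 ∧ IsLValley n w p.2 p.1}.ncard

/-- A symmetric valley `a (a-1)^ℓ a` (with `ℓ ≥ 1`) occurring at position `i`. -/
def IsSymValley (n : ℕ) (w : ℕ → ℕ) (ℓ i : ℕ) : Prop :=
  i + ℓ + 1 < n ∧ w i = w (i + 1) + 1 ∧ (∀ t, 1 ≤ t → t ≤ ℓ → w (i + t) = w (i + 1)) ∧
    w (i + ℓ + 1) = w i

/-- Number of symmetric valleys of `w` (over all `ℓ ≥ 1`). -/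
noncomputable def symValleyCount (n : ℕ) (w : ℕ → ℕ) : ℕ :=
  {p : ℕ × ℕ | 1 ≤ p.2 ∧ IsSymValley n w p.2 p.1}.ncard

/-- An `ℓ`-peak `a (a+1)^ℓ b` (with `a ≥ b`) occurring at position `i` of the
length-`n` word `w`. -/
def IsLPeak (n : ℕ) (w : ℕ → ℕ) (ℓ i : ℕ) : Prop :=
  i + ℓ + 1 < n ∧ (∀ t, 1 ≤ t → t ≤ ℓ → w (i + t) = w i + 1) ∧ w (i + ℓ + 1) ≤ w i

/-- Number of `ℓ`-peaks of `w`. -/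
noncomputable def lPeakCount (n : ℕ) (w : ℕ → ℕ) (ℓ : ℕ) : ℕ :=
  {i : ℕ | IsLPeak n w ℓ i}.ncard

/-- Number of peaks of `w` (all `ℓ`-peaks, `ℓ ≥ 1`). -/
noncomputable def peakCount (n : ℕ) (w : ℕ → ℕ) : ℕ :=
  {p : ℕ × ℕ | 1 ≤ p.2 ∧ IsLPeak n w p.2 p.1}.ncard

/-- A symmetric peak `a (a+1)^ℓ a` (with `ℓ ≥ 1`) occurring at position `i`. -/
def IsSymPeak (n : ℕ) (w : ℕ → ℕ) (ℓ i : ℕ) : Prop :=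
  i + ℓ + 1 < n ∧ (∀ t, 1 ≤ t → t ≤ ℓ → w (i + t) = w i + 1) ∧ w (i + ℓ + 1) = w i

/-- Number of symmetric peaks of `w` (over all `ℓ ≥ 1`). -/
noncomputable def symPeakCount (n : ℕ) (w : ℕ → ℕ) : ℕ :=
  {p : ℕ × ℕ | 1 ≤ p.2 ∧ IsSymPeak n w p.2 p.1}.ncard

namespace FCAux

/-- position of the last run start -/
def lastStart (n : ℕ) (w : ℕ → ℕ) : ℕ :=
  Nat.findGreatest (fun j => j = 0 ∨ w j < w (j - 1)) (n - 1)

lemma lastStart_le (n : ℕ) (w : ℕ → ℕ) : lastStart n w ≤ n - 1 :=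
  Nat.findGreatest_le _

lemma lastStart_spec (n : ℕ) (w : ℕ → ℕ) :
    lastStart n w = 0 ∨ w (lastStart n w) < w (lastStart n w - 1) :=
  Nat.findGreatest_spec (P := fun j => j = 0 ∨ w j < w (j - 1)) (Nat.zero_le _) (Or.inl rfl)

lemma lastStart_max {n : ℕ} {w : ℕ → ℕ} {j : ℕ} (h1 : lastStart n w < j)
    (h2 : j ≤ n - 1) : w (j - 1) ≤ w j := by
  have h := Nat.findGreatest_is_greatest h1 h2
  push_neg at h
  omega

lemma mono_on {n : ℕ} {w : ℕ → ℕ} {k l : ℕ} (hk : lastStart n w ≤ k)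
    (hkl : k ≤ l) (hl : l ≤ n - 1) : w k ≤ w l := by
  induction l, hkl using Nat.le_induction with
  | base => exact le_refl _
  | succ l hkl ih =>
      have h1 : w l ≤ w (l + 1) := by
        have := lastStart_max (n := n) (w := w) (j := l + 1) (by omega) hl
        simpa using this
      exact le_trans (ih (by omega)) h1

lemma isRunStart_lastStart {n : ℕ} (w : ℕ → ℕ) (hn : 1 ≤ n) :
    IsRunStart n w (lastStart n w) :=
  ⟨by have := lastStart_le n w; omega, lastStart_spec n w⟩

lemma runStart_le_lastStart {n : ℕ} {w : ℕ → ℕ} {j : ℕ} (h : IsRunStart n w j) :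
    j ≤ lastStart n w :=
  Nat.le_findGreatest (by have := h.1; omega) h.2

/-- value at the last run start -/
def aval (n : ℕ) (w : ℕ → ℕ) : ℕ := w (lastStart n w)

lemma aval_le_last {n : ℕ} (w : ℕ → ℕ) (hn : 1 ≤ n) : aval n w ≤ w (n - 1) :=
  mono_on le_rfl (lastStart_le n w) le_rfl

lemma runStart_val_le_aval {n : ℕ} {w : ℕ → ℕ} {j : ℕ} (hf : IsFlattened n w)
    (hn : 1 ≤ n) (h : IsRunStart n w j) : w j ≤ aval n w :=
  hf j (lastStart n w) h (isRunStart_lastStart w hn) (runStart_le_lastStart h)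


/-! ### Extension by one letter -/

def extw (n : ℕ) (w : ℕ → ℕ) (c : ℕ) : ℕ → ℕ := fun i => if i = n then c else w i

def trunc (n : ℕ) (v : ℕ → ℕ) : ℕ → ℕ := fun i => if i < n then v i else 0

lemma extw_lt {n : ℕ} {w : ℕ → ℕ} {c i : ℕ} (h : i < n) : extw n w c i = w i :=
  if_neg (by omega)

lemma extw_self (n : ℕ) (w : ℕ → ℕ) (c : ℕ) : extw n w c n = c := if_pos rfl

lemma runStart_extw_iff {n : ℕ} {w : ℕ → ℕ} {c j : ℕ} (hj : j < n) :
    IsRunStart (n + 1) (extw n w c) j ↔ IsRunStart n w j := by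
  unfold IsRunStart
  rw [extw_lt hj, extw_lt (show j - 1 < n by omega)]
  constructor
  · rintro ⟨-, h⟩; exact ⟨hj, h⟩
  · rintro ⟨-, h⟩; exact ⟨by omega, h⟩

lemma mem_flatcat_iff {n : ℕ} {w : ℕ → ℕ} (hn : 1 ≤ n) (hw : w ∈ FlatCat n) (c : ℕ) :
    extw n w c ∈ FlatCat (n + 1) ↔ aval n w ≤ c ∧ c ≤ w (n - 1) + 1 := by
  obtain ⟨⟨h0, hstep, hvan⟩, hflat⟩ := hw
  constructor
  · rintro ⟨⟨-, hstep', -⟩, hflat'⟩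
    have hc2 : c ≤ w (n - 1) + 1 := by
      have := hstep' (n - 1) (by omega)
      rw [show n - 1 + 1 = n by omega, extw_self, extw_lt (show n - 1 < n by omega)] at this
      exact this
    refine ⟨?_, hc2⟩
    by_cases hcx : c < w (n - 1)
    · -- n is a run start of the extension
      have hrsn : IsRunStart (n + 1) (extw n w c) n := by
        refine ⟨by omega, Or.inr ?_⟩
        rw [extw_self, extw_lt (show n - 1 < n by omega)]
        exact hcx
      have hrsl : IsRunStart (n + 1) (extw n w c) (lastStart n w) :=
        (runStart_extw_iff (by have := lastStart_le n w; omega)).2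
          (isRunStart_lastStart w hn)
      have := hflat' _ _ hrsl hrsn (by have := lastStart_le n w; omega)
      rwa [extw_self, extw_lt (show lastStart n w < n by have := lastStart_le n w; omega)]
        at this
    · exact le_trans (aval_le_last w hn) (by omega)
  · rintro ⟨hc1, hc2⟩
    refine ⟨⟨?_, ?_, ?_⟩, ?_⟩
    · rw [extw_lt (show 0 < n by omega)]; exact h0
    · intro i hi
      by_cases h : i + 1 < n
      · rw [extw_lt h, extw_lt (show i < n by omega)]; exact hstep i h
      · have hi1 : i + 1 = n := by omega
        rw [hi1, extw_self, extw_lt (show i < n by omega), show i = n - 1 by omega]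
        exact hc2
    · intro i hi
      rw [show extw n w c i = w i from if_neg (by omega)]
      exact hvan i (by omega)
    · intro i j hi hj hij
      by_cases hjn : j < n
      · have hin : i < n := lt_of_le_of_lt hij hjn
        rw [extw_lt hin, extw_lt hjn]
        exact hflat i j ((runStart_extw_iff hin).1 hi) ((runStart_extw_iff hjn).1 hj) hij
      · have hjn' : j = n := by have := hj.1; omega
        by_cases hin : i < n
        · rw [hjn', extw_lt hin, extw_self]
          have hi' : IsRunStart n w i := (runStart_extw_iff hin).1 hi
          exact le_trans (runStart_val_le_aval hflat hn hi') hc1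
        · have hin' : i = n := by have := hi.1; omega
          rw [hin', hjn']

lemma trunc_mem {n : ℕ} {v : ℕ → ℕ} (hn : 1 ≤ n) (hv : v ∈ FlatCat (n + 1)) :
    trunc n v ∈ FlatCat n := by
  obtain ⟨⟨h0, hstep, hvan⟩, hflat⟩ := hv
  have htr : ∀ i, i < n → trunc n v i = v i := fun i hi => if_pos hi
  refine ⟨⟨?_, ?_, ?_⟩, ?_⟩
  · rw [htr 0 (by omega)]; exact h0
  · intro i hi
    rw [htr _ hi, htr _ (by omega)]; exact hstep i (by omega)
  · intro i hi; exact if_neg (by omega)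
  · intro i j hi hj hij
    have hrs : ∀ k, k < n → (IsRunStart n (trunc n v) k ↔ IsRunStart (n + 1) v k) := by
      intro k hk
      unfold IsRunStart
      rw [htr k hk, htr (k - 1) (by omega)]
      constructor
      · rintro ⟨-, h⟩; exact ⟨by omega, h⟩
      · rintro ⟨-, h⟩; exact ⟨hk, h⟩
    rw [htr i hi.1, htr j hj.1]
    exact hflat i j ((hrs i hi.1).1 hi) ((hrs j hj.1).1 hj) hij

lemma extw_trunc {n : ℕ} {v : ℕ → ℕ} (hv : v ∈ FlatCat (n + 1)) :
    extw n (trunc n v) (v n) = v := by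
  funext i
  unfold extw trunc
  by_cases h : i = n
  · simp [h]
  · by_cases h2 : i < n
    · simp [h, h2]
    · simp [h, h2]
      exact (hv.1.2.2 i (by omega)).symm


/-! ### statistics -/

def dval (n : ℕ) (w : ℕ → ℕ) : ℕ := w (n - 1) - aval n w

def zval (n : ℕ) (w : ℕ → ℕ) : ℕ :=
  if w (n - 1) = aval n w ∧ 1 ≤ lastStart n w then 1 else 0

lemma lastStart_extw_lt {n : ℕ} {w : ℕ → ℕ} {c : ℕ} (hn : 1 ≤ n)
    (hc : c < w (n - 1)) : lastStart (n + 1) (extw n w c) = n := by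
  unfold lastStart
  rw [show n + 1 - 1 = n from rfl]
  apply Nat.findGreatest_eq_iff.mpr
  refine ⟨le_rfl, fun _ => Or.inr ?_, fun k hk1 hk2 => by omega⟩
  rw [extw_self, extw_lt (show n - 1 < n by omega)]
  exact hc

lemma lastStart_extw_ge {n : ℕ} {w : ℕ → ℕ} {c : ℕ} (hn : 1 ≤ n)
    (hc : w (n - 1) ≤ c) : lastStart (n + 1) (extw n w c) = lastStart n w := by
  have hl := lastStart_le n w
  show Nat.findGreatest (fun j => j = 0 ∨ extw n w c j < extw n w c (j - 1)) n
      = lastStart n w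
  apply Nat.findGreatest_eq_iff.mpr
  refine ⟨by omega, fun h0 => ?_, fun k hk1 hk2 => ?_⟩
  · rcases lastStart_spec n w with h | h
    · exact absurd h h0
    · exact Or.inr (by
        rw [extw_lt (show lastStart n w < n by omega),
          extw_lt (show lastStart n w - 1 < n by omega)]
        exact h)
  · rintro (h | h)
    · omega
    · by_cases hkn : k = n
      · rw [hkn, extw_self, extw_lt (show n - 1 < n by omega)] at h; omega
      · rw [extw_lt (by omega), extw_lt (by omega)] at h
        exact absurd h (by have := lastStart_max hk1 (by omega); omega)

lemma aval_extw_lt {n : ℕ} {w : ℕ → ℕ} {c : ℕ} (hn : 1 ≤ n)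
    (hc : c < w (n - 1)) : aval (n + 1) (extw n w c) = c := by
  unfold aval
  rw [lastStart_extw_lt hn hc, extw_self]

lemma aval_extw_ge {n : ℕ} {w : ℕ → ℕ} {c : ℕ} (hn : 1 ≤ n)
    (hc : w (n - 1) ≤ c) : aval (n + 1) (extw n w c) = aval n w := by
  unfold aval
  rw [lastStart_extw_ge hn hc, extw_lt (show lastStart n w < n by
    have := lastStart_le n w; omega)]

lemma dval_extw_lt {n : ℕ} {w : ℕ → ℕ} {c : ℕ} (hn : 1 ≤ n)
    (hc : c < w (n - 1)) : dval (n + 1) (extw n w c) = 0 := by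
  unfold dval
  rw [show n + 1 - 1 = n from rfl, aval_extw_lt hn hc, extw_self]
  omega

lemma dval_extw_eq {n : ℕ} {w : ℕ → ℕ} (hn : 1 ≤ n) :
    dval (n + 1) (extw n w (w (n - 1))) = dval n w := by
  unfold dval
  rw [show n + 1 - 1 = n from rfl, aval_extw_ge hn le_rfl, extw_self]

lemma dval_extw_up {n : ℕ} {w : ℕ → ℕ} (hn : 1 ≤ n) :
    dval (n + 1) (extw n w (w (n - 1) + 1)) = dval n w + 1 := by
  unfold dval
  rw [show n + 1 - 1 = n from rfl, aval_extw_ge hn (by omega), extw_self]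
  have := aval_le_last w hn
  omega

lemma zval_extw_lt {n : ℕ} {w : ℕ → ℕ} {c : ℕ} (hn : 1 ≤ n)
    (hc : c < w (n - 1)) : zval (n + 1) (extw n w c) = 1 := by
  unfold zval
  rw [show n + 1 - 1 = n from rfl, aval_extw_lt hn hc, extw_self,
    lastStart_extw_lt hn hc]
  simp [hn]

lemma zval_extw_eq {n : ℕ} {w : ℕ → ℕ} (hn : 1 ≤ n) :
    zval (n + 1) (extw n w (w (n - 1))) = zval n w := by
  unfold zval
  rw [show n + 1 - 1 = n from rfl, aval_extw_ge hn le_rfl, extw_self,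
    lastStart_extw_ge hn le_rfl]

lemma zval_extw_up {n : ℕ} {w : ℕ → ℕ} (hn : 1 ≤ n) :
    zval (n + 1) (extw n w (w (n - 1) + 1)) = 0 := by
  unfold zval
  rw [show n + 1 - 1 = n from rfl, aval_extw_ge hn (by omega), extw_self,
    lastStart_extw_ge hn (by omega)]
  have := aval_le_last w hn
  simp [show ¬(w (n-1) + 1 = aval n w ∧ 1 ≤ lastStart n w) by omega]


/-! ### valleys -/

def VS (n : ℕ) (w : ℕ → ℕ) : Set (ℕ × ℕ) := {p | 1 ≤ p.2 ∧ IsLValley n w p.2 p.1}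

lemma valleyCount_eq (n : ℕ) (w : ℕ → ℕ) : valleyCount n w = (VS n w).ncard := rfl

lemma VS_finite (n : ℕ) (w : ℕ → ℕ) : (VS n w).Finite := by
  apply Set.Finite.subset (Set.finite_Iio n |>.prod (Set.finite_Iio n))
  rintro ⟨i, l⟩ ⟨-, h1, -⟩
  exact ⟨by simp; omega, by simp; omega⟩

/-- the "new valley" condition for appending `c` -/
def NewV (n : ℕ) (w : ℕ → ℕ) (c : ℕ) : Prop :=
  c = w (n - 1) + 1 ∧ w (n - 1) = aval n w ∧ 1 ≤ lastStart n w

instance (n : ℕ) (w : ℕ → ℕ) (c : ℕ) : Decidable (NewV n w c) := by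
  unfold NewV; infer_instance

lemma VS_extw_of_not {n : ℕ} {w : ℕ → ℕ} {c : ℕ} (hn : 1 ≤ n)
    (h : ¬ NewV n w c) : VS (n + 1) (extw n w c) = VS n w := by
  ext ⟨i, l⟩
  simp only [VS, IsLValley, Set.mem_setOf_eq]
  constructor
  · rintro ⟨hl, hlt, hdesc, hconst, htop⟩
    by_cases hcase : i + l + 1 < n
    · refine ⟨hl, hcase, ?_, ?_, ?_⟩
      · rw [extw_lt (by omega), extw_lt (by omega)] at hdesc; exact hdesc
      · intro t ht1 ht2
        have := hconst t ht1 ht2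
        rw [extw_lt (by omega), extw_lt (by omega)] at this; exact this
      · rw [extw_lt (by omega), extw_lt (by omega)] at htop; exact htop
    · exfalso
      have hin : i + l + 1 = n := by omega
      rw [extw_lt (by omega), extw_lt (by omega)] at hdesc
      have hconst' : ∀ t, 1 ≤ t → t ≤ l → w (i + t) = w (i + 1) := by
        intro t ht1 ht2
        have := hconst t ht1 ht2
        rw [extw_lt (by omega), extw_lt (by omega)] at this; exact this
      rw [hin, extw_self, extw_lt (by omega)] at htop
      -- show lastStart n w = i + 1
      have hrs : IsRunStart n w (i + 1) := ⟨by omega, Or.inr (by simpa using hdesc)⟩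
      have h1 : i + 1 ≤ lastStart n w := runStart_le_lastStart hrs
      have h2 : lastStart n w ≤ i + 1 := by
        by_contra hgt
        push_neg at hgt
        rcases lastStart_spec n w with h' | h'
        · omega
        · have hls := lastStart_le n w
          have e1 : w (lastStart n w) = w (i + 1) := by
            have := hconst' (lastStart n w - i) (by omega) (by omega)
            rw [show i + (lastStart n w - i) = lastStart n w by omega] at this
            exact this
          have e2 : w (lastStart n w - 1) = w (i + 1) := by
            have := hconst' (lastStart n w - 1 - i) (by omega) (by omega)
            rw [show i + (lastStart n w - 1 - i) = lastStart n w - 1 by omega] at this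
            exact this
          omega
      have hls : lastStart n w = i + 1 := le_antisymm h2 h1
      apply h
      have hx : w (n - 1) = w (i + 1) := by
        rcases Nat.eq_or_lt_of_le (show 1 ≤ l from hl) with h' | h'
        · rw [show n - 1 = i + 1 by omega]
        · have := hconst' l (by omega) le_rfl
          rw [show n - 1 = i + l by omega]; exact this
      exact ⟨by rw [hx]; omega, by rw [hx, ← hls]; rfl, by omega⟩
  · rintro ⟨hl, hb, hdesc, hconst, htop⟩
    refine ⟨hl, by omega, ?_, ?_, ?_⟩
    · rw [extw_lt (by omega), extw_lt (by omega)]; exact hdesc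
    · intro t ht1 ht2
      rw [extw_lt (by omega), extw_lt (by omega)]; exact hconst t ht1 ht2
    · rw [extw_lt (by omega), extw_lt (by omega)]; exact htop

lemma VS_extw_of_new {n : ℕ} {w : ℕ → ℕ} {c : ℕ} (hn : 1 ≤ n)
    (h : NewV n w c) :
    VS (n + 1) (extw n w c)
      = insert (lastStart n w - 1, n - lastStart n w) (VS n w) ∧
      (lastStart n w - 1, n - lastStart n w) ∉ VS n w := by
  obtain ⟨hc, hxa, hj⟩ := h
  have hls := lastStart_le n w
  have hnotmem : (lastStart n w - 1, n - lastStart n w) ∉ VS n w := by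
    rintro ⟨-, hb, -⟩
    omega
  refine ⟨?_, hnotmem⟩
  ext ⟨i, l⟩
  simp only [Set.mem_insert_iff, VS, IsLValley, Set.mem_setOf_eq, Prod.mk.injEq]
  constructor
  · rintro ⟨hl, hlt, hdesc, hconst, htop⟩
    by_cases hcase : i + l + 1 < n
    · refine Or.inr ⟨hl, hcase, ?_, ?_, ?_⟩
      · rw [extw_lt (by omega), extw_lt (by omega)] at hdesc; exact hdesc
      · intro t ht1 ht2
        have := hconst t ht1 ht2
        rw [extw_lt (by omega), extw_lt (by omega)] at this; exact this
      · rw [extw_lt (by omega), extw_lt (by omega)] at htop; exact htop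
    · left
      have hin : i + l + 1 = n := by omega
      rw [extw_lt (by omega), extw_lt (by omega)] at hdesc
      have hconst' : ∀ t, 1 ≤ t → t ≤ l → w (i + t) = w (i + 1) := by
        intro t ht1 ht2
        have := hconst t ht1 ht2
        rw [extw_lt (by omega), extw_lt (by omega)] at this; exact this
      have hrs : IsRunStart n w (i + 1) := ⟨by omega, Or.inr (by simpa using hdesc)⟩
      have h1 : i + 1 ≤ lastStart n w := runStart_le_lastStart hrs
      have h2 : lastStart n w ≤ i + 1 := by
        by_contra hgt
        push_neg at hgt
        rcases lastStart_spec n w with h' | h'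
        · omega
        · have e1 : w (lastStart n w) = w (i + 1) := by
            have := hconst' (lastStart n w - i) (by omega) (by omega)
            rw [show i + (lastStart n w - i) = lastStart n w by omega] at this
            exact this
          have e2 : w (lastStart n w - 1) = w (i + 1) := by
            have := hconst' (lastStart n w - 1 - i) (by omega) (by omega)
            rw [show i + (lastStart n w - 1 - i) = lastStart n w - 1 by omega] at this
            exact this
          omega
      omega
  · rintro (⟨hi, hl⟩ | ⟨hl, hb, hdesc, hconst, htop⟩)
    · subst hi hl
      have e0 : ∀ k, lastStart n w ≤ k → k ≤ n - 1 → w k = aval n w := by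
        intro k hk1 hk2
        have u1 : aval n w ≤ w k := mono_on le_rfl hk1 hk2
        have u2 : w k ≤ w (n - 1) := mono_on hk1 hk2 le_rfl
        omega
      have hd : w (lastStart n w) < w (lastStart n w - 1) := by
        rcases lastStart_spec n w with h' | h'
        · omega
        · exact h'
      refine ⟨by omega, by omega, ?_, ?_, ?_⟩
      · rw [extw_lt (by omega), extw_lt (by omega),
          show lastStart n w - 1 + 1 = lastStart n w by omega]
        exact hd
      · intro t ht1 ht2
        rw [extw_lt (by omega), extw_lt (by omega),
          show lastStart n w - 1 + 1 = lastStart n w by omega]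
        rw [e0 (lastStart n w - 1 + t) (by omega) (by omega),
          e0 (lastStart n w) le_rfl (by omega)]
      · rw [show lastStart n w - 1 + (n - lastStart n w) + 1 = n by omega, extw_self,
          extw_lt (by omega), show lastStart n w - 1 + 1 = lastStart n w by omega]
        rw [hc, hxa]
        rfl
    · refine ⟨hl, by omega, ?_, ?_, ?_⟩
      · rw [extw_lt (by omega), extw_lt (by omega)]; exact hdesc
      · intro t ht1 ht2
        rw [extw_lt (by omega), extw_lt (by omega)]; exact hconst t ht1 ht2
      · rw [extw_lt (by omega), extw_lt (by omega)]; exact htop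

lemma valleyCount_extw {n : ℕ} {w : ℕ → ℕ} {c : ℕ} (hn : 1 ≤ n) :
    valleyCount (n + 1) (extw n w c)
      = valleyCount n w + (if NewV n w c then 1 else 0) := by
  classical
  by_cases h : NewV n w c
  · obtain ⟨he, hm⟩ := VS_extw_of_new hn h
    rw [if_pos h, valleyCount_eq, valleyCount_eq, he,
      Set.ncard_insert_of_notMem hm (VS_finite n w)]
  · rw [if_neg h, valleyCount_eq, valleyCount_eq, VS_extw_of_not hn h, add_zero]


/-! ### finiteness and summation -/

lemma flatcat_finite (n : ℕ) : (FlatCat n).Finite := by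
  have hval : ∀ w ∈ FlatCat n, ∀ i, i < n → w i < n + 1 := by
    intro w hw i hi
    have : ∀ k, k < n → w k ≤ k := by
      intro k
      induction k with
      | zero => intro _; rw [hw.1.1]
      | succ k ih =>
          intro hk
          have := hw.1.2.1 k hk
          have := ih (by omega)
          omega
    have := this i hi
    omega
  have : FlatCat n ⊆ (fun g : Fin n → Fin (n + 1) =>
      (fun i => if h : i < n then (g ⟨i, h⟩ : ℕ) else 0)) '' Set.univ := by
    intro w hw
    refine ⟨fun i => ⟨w i, hval w hw i i.2⟩, trivial, ?_⟩
    funext i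
    by_cases h : i < n
    · simp [h]
    · simp [h]
      exact (hw.1.2.2 i (by omega)).symm
  exact Set.Finite.subset ((Set.finite_univ).image _) this

noncomputable def T (n : ℕ) : Finset (ℕ → ℕ) := (flatcat_finite n).toFinset

lemma mem_T {n : ℕ} {w : ℕ → ℕ} : w ∈ T n ↔ w ∈ FlatCat n :=
  Set.Finite.mem_toFinset _

lemma sum_ext {M : Type*} [AddCommMonoid M] {n : ℕ} (hn : 1 ≤ n)
    (f : (ℕ → ℕ) → M) :
    ∑ v ∈ T (n + 1), f v
      = ∑ w ∈ T n, ∑ c ∈ Finset.Icc (aval n w) (w (n - 1) + 1), f (extw n w c) := by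
  rw [Finset.sum_sigma']
  apply Finset.sum_nbij' (i := fun v => (⟨trunc n v, v n⟩ :
      (_ : ℕ → ℕ) × ℕ)) (j := fun p => extw n p.1 p.2)
  · intro v hv
    rw [mem_T] at hv
    have htm := trunc_mem hn hv
    have het := extw_trunc hv
    rw [Finset.mem_sigma, mem_T]
    refine ⟨htm, ?_⟩
    rw [Finset.mem_Icc]
    have := (mem_flatcat_iff hn htm (v n)).1 (by rw [het]; exact hv)
    exact this
  · rintro ⟨w, c⟩ hp
    rw [Finset.mem_sigma, mem_T, Finset.mem_Icc] at hp
    rw [mem_T]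
    exact (mem_flatcat_iff hn hp.1 c).2 hp.2
  · intro v hv
    rw [mem_T] at hv
    exact extw_trunc hv
  · rintro ⟨w, c⟩ hp
    rw [Finset.mem_sigma, mem_T, Finset.mem_Icc] at hp
    have hvan := hp.1.1.2.2
    have h1 : trunc n (extw n w c) = w := by
      funext i
      unfold trunc extw
      by_cases h : i < n
      · simp [h]; omega
      · simp [h]
        exact (hvan i (by omega)).symm
    have h2 : extw n w c n = c := extw_self n w c
    exact Sigma.ext h1 (by rw [h2, h1])
  · intro v hv
    rw [mem_T] at hv
    rw [extw_trunc hv]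


/-! ### inner sums -/

lemma sum_split {M : Type*} [AddCommMonoid M] {a x : ℕ} (h : a ≤ x) (f : ℕ → M) :
    ∑ c ∈ Finset.Icc a (x + 1), f c
      = (∑ c ∈ Finset.Ico a x, f c) + f x + f (x + 1) := by
  rw [← Finset.Ico_add_one_right_eq_Icc, Finset.sum_Ico_succ_top (by omega),
    Finset.sum_Ico_succ_top (by omega)]

lemma zval_mul_dval (n : ℕ) (w : ℕ → ℕ) : zval n w * dval n w = 0 := by
  unfold zval dval
  by_cases h : w (n - 1) = aval n w ∧ 1 ≤ lastStart n w
  · rw [if_pos h]; omega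
  · rw [if_neg h]; ring

lemma newV_top (n : ℕ) (w : ℕ → ℕ) :
    (if NewV n w (w (n - 1) + 1) then (1 : ℕ) else 0) = zval n w := by
  unfold NewV zval
  by_cases h : w (n - 1) = aval n w ∧ 1 ≤ lastStart n w
  · rw [if_pos h]; exact if_pos ⟨rfl, h⟩
  · rw [if_neg h]; exact if_neg (by tauto)

lemma newV_of_ne {n : ℕ} {w : ℕ → ℕ} {c : ℕ} (h : c ≠ w (n - 1) + 1) :
    ¬ NewV n w c := fun hnv => h hnv.1

section innersums
variable {n : ℕ} {w : ℕ → ℕ} (hn : 1 ≤ n)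
include hn

lemma W1 : ∑ _c ∈ Finset.Icc (aval n w) (w (n - 1) + 1), (1 : ℚ)
    = (dval n w : ℚ) + 2 := by
  rw [Finset.sum_const, Nat.card_Icc]
  have h1 := aval_le_last w hn
  have h2 : w (n - 1) + 1 + 1 - aval n w = dval n w + 2 := by unfold dval; omega
  rw [h2]
  push_cast
  ring

lemma W2 : ∑ c ∈ Finset.Icc (aval n w) (w (n - 1) + 1),
      (dval (n + 1) (extw n w c) : ℚ) = 2 * (dval n w : ℚ) + 1 := by
  rw [sum_split (aval_le_last w hn)]
  have h0 : ∀ c ∈ Finset.Ico (aval n w) (w (n - 1)),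
      (dval (n + 1) (extw n w c) : ℚ) = 0 := by
    intro c hc
    rw [Finset.mem_Ico] at hc
    rw [dval_extw_lt hn hc.2]
    simp
  rw [Finset.sum_congr rfl h0, dval_extw_eq hn, dval_extw_up hn, Finset.sum_const]
  push_cast
  simp
  ring

lemma W3 : ∑ c ∈ Finset.Icc (aval n w) (w (n - 1) + 1),
      (zval (n + 1) (extw n w c) : ℚ) = (dval n w : ℚ) + (zval n w : ℚ) := by
  rw [sum_split (aval_le_last w hn)]
  have h0 : ∀ c ∈ Finset.Ico (aval n w) (w (n - 1)),
      (zval (n + 1) (extw n w c) : ℚ) = 1 := by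
    intro c hc
    rw [Finset.mem_Ico] at hc
    rw [zval_extw_lt hn hc.2]
    simp
  rw [Finset.sum_congr rfl h0, zval_extw_eq hn, zval_extw_up hn, Finset.sum_const,
    Nat.card_Ico]
  have hd : w (n - 1) - aval n w = dval n w := rfl
  rw [hd]
  push_cast
  simp

lemma W4 : ∑ c ∈ Finset.Icc (aval n w) (w (n - 1) + 1),
      (valleyCount (n + 1) (extw n w c) : ℚ)
    = ((dval n w : ℚ) + 2) * (valleyCount n w : ℚ) + (zval n w : ℚ) := by
  rw [sum_split (aval_le_last w hn)]
  have h0 : ∀ c ∈ Finset.Ico (aval n w) (w (n - 1)),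
      (valleyCount (n + 1) (extw n w c) : ℚ) = (valleyCount n w : ℚ) := by
    intro c hc
    rw [Finset.mem_Ico] at hc
    rw [valleyCount_extw hn, if_neg (newV_of_ne (by omega))]
    simp
  have h1 : (valleyCount (n + 1) (extw n w (w (n - 1))) : ℚ)
      = (valleyCount n w : ℚ) := by
    rw [valleyCount_extw hn, if_neg (newV_of_ne (by omega))]
    simp
  have h2 : (valleyCount (n + 1) (extw n w (w (n - 1) + 1)) : ℚ)
      = (valleyCount n w : ℚ) + (zval n w : ℚ) := by
    rw [valleyCount_extw hn, ← newV_top n w]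
    push_cast
    ring
  rw [Finset.sum_congr rfl h0, h1, h2, Finset.sum_const, Nat.card_Ico]
  have hd : w (n - 1) - aval n w = dval n w := rfl
  rw [hd]
  push_cast
  simp only [nsmul_eq_mul]
  ring

lemma W5 : ∑ c ∈ Finset.Icc (aval n w) (w (n - 1) + 1),
      ((valleyCount (n + 1) (extw n w c) : ℚ) * (dval (n + 1) (extw n w c) : ℚ))
    = 2 * (valleyCount n w : ℚ) * (dval n w : ℚ) + (valleyCount n w : ℚ)
      + (zval n w : ℚ) := by
  rw [sum_split (aval_le_last w hn)]
  have h0 : ∀ c ∈ Finset.Ico (aval n w) (w (n - 1)),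
      (valleyCount (n + 1) (extw n w c) : ℚ) * (dval (n + 1) (extw n w c) : ℚ)
        = 0 := by
    intro c hc
    rw [Finset.mem_Ico] at hc
    rw [dval_extw_lt hn hc.2]
    simp
  have h1 : (valleyCount (n + 1) (extw n w (w (n - 1))) : ℚ)
      = (valleyCount n w : ℚ) := by
    rw [valleyCount_extw hn, if_neg (newV_of_ne (by omega))]
    simp
  have h2 : (valleyCount (n + 1) (extw n w (w (n - 1) + 1)) : ℚ)
      = (valleyCount n w : ℚ) + (zval n w : ℚ) := by
    rw [valleyCount_extw hn, ← newV_top n w]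
    push_cast
    ring
  rw [Finset.sum_congr rfl h0, Finset.sum_const, h1, h2, dval_extw_eq hn,
    dval_extw_up hn]
  have hzd : (zval n w : ℚ) * (dval n w : ℚ) = 0 := by
    have h := zval_mul_dval n w
    have h' : ((zval n w : ℕ) : ℚ) * ((dval n w : ℕ) : ℚ)
        = ((zval n w * dval n w : ℕ) : ℚ) := by push_cast; ring
    rw [h', h]
    simp
  push_cast
  simp only [smul_zero]
  nlinarith [hzd]

end innersums


/-! ### the five sequences -/

noncomputable def Cq (n : ℕ) : ℚ := ∑ _w ∈ T n, (1 : ℚ)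
noncomputable def Dq (n : ℕ) : ℚ := ∑ w ∈ T n, (dval n w : ℚ)
noncomputable def Zq (n : ℕ) : ℚ := ∑ w ∈ T n, (zval n w : ℚ)
noncomputable def Vq (n : ℕ) : ℚ := ∑ w ∈ T n, (valleyCount n w : ℚ)
noncomputable def Wq (n : ℕ) : ℚ :=
  ∑ w ∈ T n, (valleyCount n w : ℚ) * (dval n w : ℚ)

section recs
variable {n : ℕ} (hn : 1 ≤ n)
include hn

lemma Cq_rec : Cq (n + 1) = Dq n + 2 * Cq n := by
  unfold Cq Dq
  rw [sum_ext hn, Finset.sum_congr rfl (fun w _ => W1 hn (w := w)),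
    Finset.sum_add_distrib, Finset.mul_sum]
  congr 1
  apply Finset.sum_congr rfl
  intros; ring

lemma Dq_rec : Dq (n + 1) = 2 * Dq n + Cq n := by
  unfold Dq Cq
  rw [sum_ext hn, Finset.sum_congr rfl (fun w _ => W2 hn (w := w)),
    Finset.sum_add_distrib, Finset.mul_sum]

lemma Zq_rec : Zq (n + 1) = Dq n + Zq n := by
  unfold Zq Dq
  rw [sum_ext hn, Finset.sum_congr rfl (fun w _ => W3 hn (w := w)),
    Finset.sum_add_distrib]

lemma Vq_rec : Vq (n + 1) = Wq n + 2 * Vq n + Zq n := by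
  unfold Vq Wq Zq
  rw [sum_ext hn, Finset.sum_congr rfl (fun w _ => W4 hn (w := w))]
  have h : ∀ w ∈ T n, ((dval n w : ℚ) + 2) * (valleyCount n w : ℚ) + (zval n w : ℚ)
      = (valleyCount n w : ℚ) * (dval n w : ℚ)
        + (2 * (valleyCount n w : ℚ) + (zval n w : ℚ)) := fun w _ => by ring
  rw [Finset.sum_congr rfl h, Finset.sum_add_distrib, Finset.sum_add_distrib,
    Finset.mul_sum]
  ring

lemma Wq_rec : Wq (n + 1) = 2 * Wq n + Vq n + Zq n := by
  unfold Wq Vq Zq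
  rw [sum_ext hn, Finset.sum_congr rfl (fun w _ => W5 hn (w := w))]
  have h : ∀ w ∈ T n, 2 * (valleyCount n w : ℚ) * (dval n w : ℚ)
        + (valleyCount n w : ℚ) + (zval n w : ℚ)
      = 2 * ((valleyCount n w : ℚ) * (dval n w : ℚ))
        + ((valleyCount n w : ℚ) + (zval n w : ℚ)) := fun w _ => by ring
  rw [Finset.sum_congr rfl h, Finset.sum_add_distrib, Finset.sum_add_distrib,
    Finset.mul_sum]
  ring

end recs


/-! ### base case -/

lemma flatcat_one : FlatCat 1 = {fun _ => 0} := by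
  ext w
  constructor
  · rintro ⟨⟨h0, -, hvan⟩, -⟩
    have : w = fun _ => 0 := by
      funext i
      cases i with
      | zero => exact h0
      | succ k => exact hvan (k + 1) (by omega)
    simp [this]
  · rintro h
    simp only [Set.mem_singleton_iff] at h
    subst h
    exact ⟨⟨rfl, fun i hi => by omega, fun i _ => rfl⟩,
      fun i j _ _ _ => le_refl 0⟩

lemma T_one : T 1 = {fun _ => 0} := by
  ext w
  rw [mem_T, flatcat_one]
  simp

lemma lastStart_one : lastStart 1 (fun _ => 0) = 0 := by
  unfold lastStart
  simp

lemma valleyCount_one : valleyCount 1 (fun _ => 0) = 0 := by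
  rw [valleyCount_eq]
  have : VS 1 (fun _ => 0) = ∅ := by
    ext ⟨i, l⟩
    simp only [VS, IsLValley, Set.mem_setOf_eq, Set.mem_empty_iff_false, iff_false]
    rintro ⟨-, h, -⟩
    omega
  rw [this, Set.ncard_empty]

lemma base_vals : Cq 1 = 1 ∧ Dq 1 = 0 ∧ Zq 1 = 0 ∧ Vq 1 = 0 ∧ Wq 1 = 0 := by
  unfold Cq Dq Zq Vq Wq
  rw [T_one]
  simp only [Finset.sum_singleton]
  refine ⟨trivial, ?_, ?_, ?_, ?_⟩
  · unfold dval aval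
    simp
  · unfold zval
    rw [if_neg (by rw [lastStart_one]; omega)]
    simp
  · rw [valleyCount_one]; simp
  · rw [valleyCount_one]; simp

/-! ### closed forms -/

lemma closed_form (m : ℕ) :
    Cq (m + 1) = (3 ^ m + 1) / 2 ∧ Dq (m + 1) = (3 ^ m - 1) / 2 ∧
    Zq (m + 1) = (3 ^ m - 2 * (m : ℚ) - 1) / 4 ∧
    Vq (m + 1) = (3 ^ (m + 1) * (((m : ℚ) + 1) - 4) + 9 * ((m : ℚ) + 1)) / 36 ∧
    Wq (m + 1) = (3 ^ (m + 1) * (((m : ℚ) + 1) - 4) + 9 * ((m : ℚ) + 1)) / 36 := by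
  induction m with
  | zero =>
      obtain ⟨h1, h2, h3, h4, h5⟩ := base_vals
      rw [h1, h2, h3, h4, h5]
      norm_num
  | succ m ih =>
      obtain ⟨hC, hD, hZ, hV, hW⟩ := ih
      have hn : 1 ≤ m + 1 := by omega
      refine ⟨?_, ?_, ?_, ?_, ?_⟩
      · rw [Cq_rec hn, hC, hD]; push_cast; ring
      · rw [Dq_rec hn, hC, hD]; push_cast; ring
      · rw [Zq_rec hn, hD, hZ]; push_cast; ring
      · rw [Vq_rec hn, hW, hV, hZ]; push_cast; ring
      · rw [Wq_rec hn, hW, hV, hZ]; push_cast; ring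

lemma Vq_closed {n : ℕ} (hn : 1 ≤ n) :
    Vq n = (3 ^ n * ((n : ℚ) - 4) + 9 * (n : ℚ)) / 36 := by
  obtain ⟨m, rfl⟩ : ∃ m, n = m + 1 := ⟨n - 1, by omega⟩
  have := (closed_form m).2.2.2.1
  rw [this]
  push_cast
  ring

end FCAux

/-- For every `n ≥ 4`, the total number of valleys over all flattened Catalan
words of length `n` equals `(3^n·(n - 4) + 9n)/36`. -/
theorem flatCat_total_valleys (n : ℕ) (hn : 4 ≤ n) :
    ((∑ᶠ w ∈ FlatCat n, valleyCount n w : ℕ) : ℚ) =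
      (3 ^ n * ((n : ℚ) - 4) + 9 * (n : ℚ)) / 36 := by
  have h1 : FlatCat n = ↑(FCAux.T n) := ((FCAux.flatcat_finite n).coe_toFinset).symm
  rw [h1, finsum_mem_coe_finset, Nat.cast_sum]
  exact FCAux.Vq_closed (by omega)
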